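/- Let L ≥ m > 0 with L/m < 3 + 2√2 and set β = ((√L − √m)/(√L + √m))². Then for every ω ∈ ℝ, Re( ((e^{jω} + √β)/(e^{jω} − √β))² ) > 0; that is, the transfer function H(z) = ((z + √β)/(z − √β))² has strictly positive real part everywhere on the unit circle. -/

import Mathlib

open Real Complex

set_option maxHeartbeats 1000000

/-- For `L ≥ m > 0` with `L/m < 3 + 2√2` and Polyak's inertia parameter
`β = ((√L − √m)/(√L + √m))²`, the transfer function
`H(z) = ((z + √β)/(z − √β))²` has strictly positive real part everywhere on
the unit circle. -/
theorem polyak_transfer_function_spr (m L : ℝ) (hm : 0 < m) (hmL : m ≤ L)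
    (hκ : L / m < 3 + 2 * Real.sqrt 2)
    (β : ℝ)
    (hβ : β = ((Real.sqrt L - Real.sqrt m) / (Real.sqrt L + Real.sqrt m)) ^ 2) :
    ∀ ω : ℝ,
      0 < (((Complex.exp (ω * Complex.I) + (Real.sqrt β : ℂ)) /
            (Complex.exp (ω * Complex.I) - (Real.sqrt β : ℂ))) ^ 2).re := by
  intro ω
  set b : ℝ := Real.sqrt β with hb
  have hb0 : 0 ≤ b := Real.sqrt_nonneg _
  have hL0 : 0 < L := lt_of_lt_of_le hm hmL
  have hsm : 0 < Real.sqrt m := Real.sqrt_pos.mpr hm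
  have hsL : 0 < Real.sqrt L := Real.sqrt_pos.mpr hL0
  have hsml : Real.sqrt m ≤ Real.sqrt L := Real.sqrt_le_sqrt hmL
  have hsq2 : Real.sqrt 2 ^ 2 = 2 := Real.sq_sqrt (by norm_num)
  have h2gt : 1 < Real.sqrt 2 := by nlinarith [Real.sqrt_nonneg 2]
  have h2lt : Real.sqrt 2 < 2 := by nlinarith [Real.sqrt_nonneg 2]
  have hbval : b = (Real.sqrt L - Real.sqrt m) / (Real.sqrt L + Real.sqrt m) := by
    rw [hb, hβ, Real.sqrt_sq (div_nonneg (by linarith) (by positivity))]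
  have hsqrt3 : Real.sqrt (3 + 2 * Real.sqrt 2) = 1 + Real.sqrt 2 := by
    rw [show (3 + 2 * Real.sqrt 2) = (1 + Real.sqrt 2) ^ 2 by nlinarith]
    exact Real.sqrt_sq (by positivity)
  have hLlt : Real.sqrt L < (1 + Real.sqrt 2) * Real.sqrt m := by
    have h1 : L < (3 + 2 * Real.sqrt 2) * m := by
      rw [div_lt_iff₀ hm] at hκ; linarith
    have := Real.sqrt_lt_sqrt hL0.le h1
    rwa [Real.sqrt_mul (by positivity), hsqrt3] at this
  have hblt : b < Real.sqrt 2 - 1 := by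
    rw [hbval, div_lt_iff₀ (by positivity)]
    nlinarith [hLlt, hsq2, hsm, hsL]
  have hb2 : b ^ 2 + 2 * b < 1 := by nlinarith [hblt, hb0, hsq2]
  have hexp : Complex.exp (ω * Complex.I) =
      Complex.ofReal (Real.cos ω) + Complex.ofReal (Real.sin ω) * Complex.I := by
    rw [Complex.exp_mul_I]
    push_cast
    ring
  set c := Real.cos ω
  set s := Real.sin ω
  have hcs : s ^ 2 + c ^ 2 = 1 := Real.sin_sq_add_cos_sq ω
  rw [hexp, div_pow, Complex.div_re]
  simp only [pow_two, Complex.mul_re, Complex.mul_im, Complex.add_re, Complex.add_im,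
    Complex.sub_re, Complex.sub_im, Complex.ofReal_re, Complex.ofReal_im,
    Complex.I_re, Complex.I_im, Complex.normSq_apply]
  rw [← add_div]
  have hc1 : c ≤ 1 := Real.cos_le_one ω
  have hc2 : -1 ≤ c := Real.neg_one_le_cos ω
  have hD : 0 < (c - b) ^ 2 + s ^ 2 := by nlinarith [hb0, hb2, sq_nonneg (1 - b), sq_nonneg s]
  have h1 : 0 < 1 - b ^ 2 - 2 * b := by linarith
  have h2 : 0 < 1 - b ^ 2 + 2 * b := by linarith
  apply div_pos
  · ring_nf
    nlinarith [mul_pos h1 h2, mul_nonneg (mul_nonneg hb0 hb0) (sq_nonneg c), hcs]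
  · ring_nf
    nlinarith [mul_pos hD hD]
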